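/- Let 𝒳 be a linearly ordered set, let X and X' be swap-neighboring finite multisets over 𝒳 of size n, and let r ∈ ℝ be fixed. Define the utility u(X, e) = −| r_max(X, e) − r | for e ∈ 𝒳. Then for every e ∈ 𝒳, |u(X, e) − u(X', e)| ≤ 1. -/
import Mathlib


/-- `rmin X x` is the number of elements of the multiset `X` strictly less than `x`. -/
def rmin {𝒳 : Type*} [LinearOrder 𝒳] (X : Multiset 𝒳) (x : 𝒳) : ℕ :=
  (X.filter (fun y => y < x)).card

/-- `rmax X x` is the number of elements of the multiset `X` at most `x`. -/
def rmax {𝒳 : Type*} [LinearOrder 𝒳] (X : Multiset 𝒳) (x : 𝒳) : ℕ :=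
  (X.filter (fun y => y ≤ x)).card

/-- `X'` is obtained from `X` by removing one element and inserting one element. -/
def SwapNeighbor {𝒳 : Type*} [DecidableEq 𝒳] (X X' : Multiset 𝒳) : Prop :=
  ∃ a b, a ∈ X ∧ X' = b ::ₘ X.erase a

lemma rmax_key {𝒳 : Type*} [LinearOrder 𝒳] (X X' : Multiset 𝒳)
    (hnb : SwapNeighbor X X') (e : 𝒳) :
    (rmax X' e : ℤ) - rmax X e ≤ 1 ∧ (rmax X e : ℤ) - rmax X' e ≤ 1 := by
  obtain ⟨a, b, ha, rfl⟩ := hnb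
  have hX : X = a ::ₘ X.erase a := (Multiset.cons_erase ha).symm
  have h1 : rmax (b ::ₘ X.erase a) e
      = (if b ≤ e then 1 else 0) + rmax (X.erase a) e := by
    simp [rmax, Multiset.filter_cons]
    split_ifs <;> simp
  have h2 : rmax X e = (if a ≤ e then 1 else 0) + rmax (X.erase a) e := by
    conv_lhs => rw [hX]
    simp [rmax, Multiset.filter_cons]
    split_ifs <;> simp
  rw [h1, h2]
  constructor <;> push_cast <;> split_ifs <;> omega

theorem stmt11 {𝒳 : Type*} [LinearOrder 𝒳] (X X' : Multiset 𝒳) (n : ℕ)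
    (hX : X.card = n) (hX' : X'.card = n) (hnb : SwapNeighbor X X')
    (r : ℝ) (e : 𝒳) :
    |(-|(rmax X e : ℝ) - r|) - (-|(rmax X' e : ℝ) - r|)| ≤ 1 := by
  obtain ⟨h1, h2⟩ := rmax_key X X' hnb e
  have hd : |(rmax X e : ℝ) - (rmax X' e : ℝ)| ≤ 1 := by
    have h : |(rmax X e : ℤ) - (rmax X' e : ℤ)| ≤ 1 := abs_le.2 ⟨by omega, h2⟩
    exact_mod_cast h
  rw [show (-|(rmax X e : ℝ) - r|) - (-|(rmax X' e : ℝ) - r|)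
      = |(rmax X' e : ℝ) - r| - |(rmax X e : ℝ) - r| by ring]
  refine le_trans (abs_abs_sub_abs_le_abs_sub _ _) ?_
  have : ((rmax X' e : ℝ) - r) - ((rmax X e : ℝ) - r) = -((rmax X e : ℝ) - (rmax X' e : ℝ)) := by ring
  rw [this, abs_neg]
  exact hd
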